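/- Fix an integer n ≥ 2 and let V : [0,∞) → ℝ^{n-1} be continuous. If (Z, η) is a solution of the Skorohod-type problem with data V and U := Z + V, then for every T > 0, sup_{0 ≤ t ≤ T, 1 ≤ k ≤ n-1} |U_k(t)| ≤ 2·sup_{0 ≤ t ≤ T, 1 ≤ k ≤ n-1} |V_k(t)|. -/

import Mathlib

set_option maxHeartbeats 1000000


open MeasureTheory

open MeasureTheory

/-- The `(n-1) × (n-1)` tridiagonal matrix `Aⁿ` with `-2` on the diagonal and
`1` on the sub/super-diagonals. -/
def An (n : ℕ) : Matrix (Fin (n-1)) (Fin (n-1)) ℝ :=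
  Matrix.of fun k i => if k = i then -2 else if |(k : ℤ) - (i : ℤ)| = 1 then 1 else 0

/-- `(Z, η)` is a solution of the Skorohod-type problem
`dZ(t) = n²AⁿZ(t)dt + dη(t)`, `Z(t) ≥ -V(t)`, `∫₀ᵗ ⟨Z+V, dη⟩ = 0` with data `V`:
`Z` is continuous with `Z_i(t) ≥ -V_i(t)`; each `η_i` is a continuous nondecreasing
(Stieltjes) function with `η_i(0) = 0`; `Z(t) = ∫₀ᵗ n²AⁿZ(s) ds + η(t)`; and
`Σ_i ∫_{[0,t]} (Z_i(s) + V_i(s)) dη_i(s) = 0` (Lebesgue–Stieltjes integrals). -/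
def IsSkorohodSolution (n : ℕ) (V : ℝ → Fin (n-1) → ℝ)
    (Z : ℝ → Fin (n-1) → ℝ) (η : Fin (n-1) → StieltjesFunction ℝ) : Prop :=
  ContinuousOn Z (Set.Ici 0) ∧
  (∀ t ≥ (0:ℝ), ∀ i, Z t i ≥ -V t i) ∧
  (∀ i, Continuous (η i)) ∧
  (∀ i, η i 0 = 0) ∧
  (∀ t ≥ (0:ℝ), ∀ i,
    Z t i = (∫ s in (0:ℝ)..t, (n : ℝ)^2 * (An n).mulVec (Z s) i) + η i t) ∧
  (∀ t ≥ (0:ℝ),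
    ∑ i, ∫ s in Set.Icc (0:ℝ) t, (Z s i + V s i) ∂((η i).measure) = 0)

lemma An_row_sum_le (n : ℕ) (k : Fin (n-1)) :
    ∑ j ∈ Finset.univ.erase k, An n k j ≤ 2 := by
  classical
  have h1 : ∀ j ∈ Finset.univ.erase k, An n k j =
      if |(k : ℤ) - (j : ℤ)| = 1 then (1:ℝ) else 0 := by
    intro j hj
    have : k ≠ j := fun hkj => (Finset.mem_erase.mp hj).1 hkj.symm
    simp [An, this]
  rw [Finset.sum_congr rfl h1, Finset.sum_boole]
  have hcard : ((Finset.univ.erase k).filter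
      (fun j : Fin (n-1) => |(k : ℤ) - (j : ℤ)| = 1)).card ≤ 2 := by
    have : ((Finset.univ.erase k).filter
        (fun j : Fin (n-1) => |(k : ℤ) - (j : ℤ)| = 1)).card ≤
        ({(k : ℤ) - 1, (k : ℤ) + 1} : Finset ℤ).card := by
      refine Finset.card_le_card_of_injOn (fun j : Fin (n-1) => (j : ℤ)) ?_ ?_
      · intro j hj
        have hj' := (Finset.mem_filter.mp hj).2
        have : (j : ℤ) = (k : ℤ) - 1 ∨ (j : ℤ) = (k : ℤ) + 1 := by
          rcases abs_eq (by norm_num : (0:ℤ) ≤ 1) |>.mp hj' with h | h <;> omega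
        simp only [Finset.mem_insert, Finset.mem_singleton]
        simpa only [Finset.coe_insert, Finset.coe_singleton, Set.mem_insert_iff, Set.mem_singleton_iff] using this
      · intro a _ b _ hab
        simp only [] at hab; exact Fin.ext (by exact_mod_cast hab)
    calc _ ≤ _ := this
      _ ≤ 2 := Finset.card_insert_le _ _ |>.trans (by simp)
  exact_mod_cast hcard

lemma An_mulVec_le (n : ℕ) (Z : Fin (n-1) → ℝ) (M : ℝ) (hM : 0 ≤ M)
    (hZ : ∀ j, Z j ≤ M) (k : Fin (n-1)) :
    (An n).mulVec Z k ≤ -2 * Z k + 2 * M := by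
  classical
  have hmv : (An n).mulVec Z k = ∑ j, An n k j * Z j := by
    simp [Matrix.mulVec, dotProduct]
  rw [hmv, ← Finset.add_sum_erase _ _ (Finset.mem_univ k)]
  have hkk : An n k k = -2 := by simp [An]
  have hrest : ∑ j ∈ Finset.univ.erase k, An n k j * Z j ≤ 2 * M := by
    calc ∑ j ∈ Finset.univ.erase k, An n k j * Z j
        ≤ ∑ j ∈ Finset.univ.erase k, An n k j * M := by
          apply Finset.sum_le_sum
          intro j hj
          have hnn : 0 ≤ An n k j := by
            have : k ≠ j := fun hkj => (Finset.mem_erase.mp hj).1 hkj.symm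
            simp only [An, Matrix.of_apply, if_neg this]
            split <;> norm_num
          exact mul_le_mul_of_nonneg_left (hZ j) hnn
      _ = (∑ j ∈ Finset.univ.erase k, An n k j) * M := by rw [Finset.sum_mul]
      _ ≤ 2 * M := mul_le_mul_of_nonneg_right (An_row_sum_le n k) hM
  rw [hkk]
  linarith

/-- If `(Z, η)` solves the Skorohod-type problem with data `V` and `U := Z + V`, then
`sup_{0≤t≤T, 1≤k≤n-1} |U_k(t)| ≤ 2 sup_{0≤t≤T, 1≤k≤n-1} |V_k(t)|`. -/
theorem skorohod_sup_bound (n : ℕ) (hn : 2 ≤ n)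
    (V : ℝ → Fin (n-1) → ℝ) (hV : ContinuousOn V (Set.Ici 0))
    (Z : ℝ → Fin (n-1) → ℝ) (η : Fin (n-1) → StieltjesFunction ℝ)
    (h : IsSkorohodSolution n V Z η)
    (U : ℝ → Fin (n-1) → ℝ) (hU : ∀ t k, U t k = Z t k + V t k)
    (T : ℝ) (hT : 0 < T) (t : ℝ) (ht : t ∈ Set.Icc 0 T) (k : Fin (n-1)) :
    |U t k| ≤ 2 * sSup {v : ℝ | ∃ s ∈ Set.Icc (0:ℝ) T, ∃ j : Fin (n-1), v = |V s j|} := by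
  classical
  obtain ⟨hZc, hpos, hηc, hη0, heq, hcomp⟩ := h
  have hm : 0 < n - 1 := by omega
  have j₀ : Fin (n-1) := ⟨0, hm⟩
  set W : Set ℝ := {v : ℝ | ∃ s ∈ Set.Icc (0:ℝ) T, ∃ j : Fin (n-1), v = |V s j|} with hWdef
  set S := sSup W with hSdef
  -- extensions to ℝ
  have hmax : ∀ s : ℝ, max s 0 ∈ Set.Ici (0:ℝ) := fun s => le_max_right s 0
  set Z' : ℝ → Fin (n-1) → ℝ := fun s => Z (max s 0) with hZ'def
  set V' : ℝ → Fin (n-1) → ℝ := fun s => V (max s 0) with hV'def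
  have hZ'c : Continuous Z' := hZc.comp_continuous (continuous_id.max continuous_const) hmax
  have hV'c : Continuous V' := hV.comp_continuous (continuous_id.max continuous_const) hmax
  have hZ'eq : ∀ s : ℝ, 0 ≤ s → Z' s = Z s := by
    intro s hs; simp only [hZ'def, max_eq_left hs]
  have hV'eq : ∀ s : ℝ, 0 ≤ s → V' s = V s := by
    intro s hs; simp only [hV'def, max_eq_left hs]
  have hZ'cj : ∀ j, Continuous fun s => Z' s j := fun j => (continuous_apply j).comp hZ'c
  have hV'cj : ∀ j, Continuous fun s => V' s j := fun j => (continuous_apply j).comp hV'c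
  have huniv : (Finset.univ : Finset (Fin (n-1))).Nonempty := ⟨j₀, Finset.mem_univ _⟩
  -- S is an upper bound for |V| on [0,T]
  have hWbdd : BddAbove W := by
    have hVabs : ∀ j : Fin (n-1), Continuous fun s => |V' s j| :=
      fun j => (hV'cj j).abs
    set G : ℝ → ℝ := fun s => Finset.univ.sup' huniv (fun j => |V' s j|) with hGdef
    have hGc : Continuous G := Continuous.finset_sup'_apply huniv (fun j _ => hVabs j)
    obtain ⟨t₂, _, hmax₂⟩ := isCompact_Icc.exists_isMaxOn (Set.nonempty_Icc.mpr hT.le)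
      hGc.continuousOn
    refine ⟨G t₂, ?_⟩
    rintro v ⟨s, hs, j, rfl⟩
    calc |V s j| = |V' s j| := by rw [hV'eq s hs.1]
      _ ≤ G s := Finset.le_sup' (fun j => |V' s j|) (Finset.mem_univ j)
      _ ≤ G t₂ := hmax₂ hs
  have hSle : ∀ s ∈ Set.Icc (0:ℝ) T, ∀ j, |V s j| ≤ S := by
    intro s hs j
    exact le_csSup hWbdd ⟨s, hs, j, rfl⟩
  have hS0 : 0 ≤ S := le_trans (abs_nonneg _) (hSle 0 ⟨le_refl 0, hT.le⟩ j₀)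
  -- the running max of Z'
  set F : ℝ → ℝ := fun s => Finset.univ.sup' huniv (fun j => Z' s j) with hFdef
  have hFc : Continuous F := Continuous.finset_sup'_apply huniv (fun j _ => hZ'cj j)
  obtain ⟨t₁, ht₁, hmax₁⟩ := isCompact_Icc.exists_isMaxOn (Set.nonempty_Icc.mpr hT.le)
    hFc.continuousOn
  set M := F t₁ with hMdef
  have hFM : ∀ s ∈ Set.Icc (0:ℝ) T, F s ≤ M := fun s hs => hmax₁ hs
  have hZM : ∀ s ∈ Set.Icc (0:ℝ) T, ∀ j, Z' s j ≤ M := by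
    intro s hs j
    exact le_trans (Finset.le_sup' (fun j => Z' s j) (Finset.mem_univ j)) (hFM s hs)
  -- Z 0 = 0
  have hZ0 : ∀ i, Z 0 i = 0 := by
    intro i
    have := heq 0 le_rfl i
    simpa [intervalIntegral.integral_same, hη0 i] using this
  -- Main claim : Z ≤ S on [0,T]
  have hZS : ∀ s ∈ Set.Icc (0:ℝ) T, ∀ j, Z s j ≤ S := by
    rcases le_or_gt M S with hMS | hSM
    · intro s hs j
      have := hZM s hs j
      rw [hZ'eq s hs.1] at this
      exact this.trans hMS
    · exfalso
      have hM0 : 0 < M := lt_of_le_of_lt hS0 hSM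
      -- set of times where max is attained
      set C : Set ℝ := Set.Icc 0 T ∩ F ⁻¹' {M} with hCdef
      have hCcl : IsClosed C := isClosed_Icc.inter (isClosed_singleton.preimage hFc)
      have hCne : C.Nonempty := ⟨t₁, ht₁, rfl⟩
      have hCbdd : BddBelow C := ⟨0, fun x hx => hx.1.1⟩
      set t₀ := sInf C with ht₀def
      have ht₀C : t₀ ∈ C := hCcl.csInf_mem hCne hCbdd
      have ht₀T : t₀ ∈ Set.Icc (0:ℝ) T := ht₀C.1
      have hFt₀ : F t₀ = M := ht₀C.2
      have hZ'0 : ∀ j, Z' 0 j = 0 := by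
        intro j; rw [hZ'eq 0 le_rfl]; exact hZ0 j
      have hF0 : F 0 = 0 := by
        have : (fun j => Z' 0 j) = fun _ => (0:ℝ) := funext hZ'0
        simp only [hFdef, this, Finset.sup'_const]
      have ht₀pos : 0 < t₀ := by
        rcases lt_or_eq_of_le ht₀T.1 with h' | h'
        · exact h'
        · exfalso; rw [← h', hF0] at hFt₀; linarith
      -- the maximizing coordinate
      obtain ⟨ks, _, hks⟩ := Finset.exists_mem_eq_sup' huniv (fun j => Z' t₀ j)
      have hZt₀ : Z' t₀ ks = M := by rw [← hks]; exact hFt₀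
      -- a small interval to the left of t₀ where Z' + V' > 0 at ks
      set Φ : ℝ → ℝ := fun s => Z' s ks + V' s ks with hΦdef
      have hΦc : Continuous Φ := (hZ'cj ks).add (hV'cj ks)
      have hΦt₀ : 0 < Φ t₀ := by
        have h1 : -S ≤ V t₀ ks := by
          have := hSle t₀ ht₀T ks
          have := neg_abs_le (V t₀ ks)
          linarith
        have h2 : V' t₀ ks = V t₀ ks := by rw [hV'eq t₀ ht₀T.1]
        simp only [hΦdef, hZt₀, h2]
        linarith
      have hopen : IsOpen {s : ℝ | 0 < Φ s} := isOpen_lt continuous_const hΦc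
      obtain ⟨ε, hε, hball⟩ := Metric.isOpen_iff.mp hopen t₀ hΦt₀
      set δ := min (ε/2) t₀ with hδdef
      have hδpos : 0 < δ := lt_min (by linarith) ht₀pos
      have hδt₀ : δ ≤ t₀ := min_le_right _ _
      have hδε : δ ≤ ε/2 := min_le_left _ _
      have hAsub : Set.Icc (t₀-δ) t₀ ⊆ Set.Icc (0:ℝ) T :=
        fun x hx => ⟨by linarith [hx.1], le_trans hx.2 ht₀T.2⟩
      have hΦpos : ∀ s ∈ Set.Icc (t₀-δ) t₀, 0 < Φ s := by
        intro s hs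
        apply hball
        rw [Metric.mem_ball, Real.dist_eq]
        have h1 : |s - t₀| ≤ δ := abs_le.mpr ⟨by linarith [hs.1], by linarith [hs.2]⟩
        linarith
      -- complementarity : the η ks-integral of Z + V over [0, t₀] vanishes
      set μ := (η ks).measure with hμdef
      have hterm0 : ∫ s in Set.Icc (0:ℝ) t₀, (Z s ks + V s ks) ∂μ = 0 := by
        have hsum := hcomp t₀ ht₀T.1
        have hnn : ∀ i ∈ (Finset.univ : Finset (Fin (n-1))),
            0 ≤ ∫ s in Set.Icc (0:ℝ) t₀, (Z s i + V s i) ∂((η i).measure) := by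
          intro i _
          apply setIntegral_nonneg measurableSet_Icc
          intro s hs
          have := hpos s hs.1 i
          linarith
        exact (Finset.sum_eq_zero_iff_of_nonneg hnn).mp hsum ks (Finset.mem_univ ks)
      have hΦint : IntegrableOn Φ (Set.Icc (0:ℝ) t₀) μ :=
        hΦc.continuousOn.integrableOn_compact isCompact_Icc
      have hfint : IntegrableOn (fun s => Z s ks + V s ks) (Set.Icc (0:ℝ) t₀) μ := by
        apply hΦint.congr_fun _ measurableSet_Icc
        intro s hs
        simp only [hΦdef, hZ'eq s hs.1, hV'eq s hs.1]
      -- the measure μ vanishes on [t₀-δ, t₀]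
      obtain ⟨sm, hsm, hminm⟩ := isCompact_Icc.exists_isMinOn
        (Set.nonempty_Icc.mpr (by linarith : t₀ - δ ≤ t₀)) hΦc.continuousOn
      have hc : 0 < Φ sm := hΦpos sm hsm
      have hμA0 : μ (Set.Icc (t₀-δ) t₀) = 0 := by
        by_contra hne0
        have hfin : μ (Set.Icc (t₀-δ) t₀) ≠ ⊤ := (isCompact_Icc.measure_lt_top).ne
        have hsubA : Set.Icc (t₀-δ) t₀ ⊆ Set.Icc (0:ℝ) t₀ :=
          fun x hx => ⟨by linarith [hx.1], hx.2⟩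
        have h1 : Φ sm * (μ (Set.Icc (t₀-δ) t₀)).toReal ≤
            ∫ s in Set.Icc (t₀-δ) t₀, (Z s ks + V s ks) ∂μ := by
          apply setIntegral_ge_of_const_le_real measurableSet_Icc hfin
          · intro x hx
            have hx0 : (0:ℝ) ≤ x := by linarith [hx.1]
            have : Φ x = Z x ks + V x ks := by
              simp only [hΦdef, hZ'eq x hx0, hV'eq x hx0]
            rw [← this]
            exact hminm hx
          · exact hfint.mono_set hsubA
        have h2 : ∫ s in Set.Icc (t₀-δ) t₀, (Z s ks + V s ks) ∂μ ≤
            ∫ s in Set.Icc (0:ℝ) t₀, (Z s ks + V s ks) ∂μ := by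
          apply setIntegral_mono_set hfint
          · filter_upwards [ae_restrict_mem measurableSet_Icc] with x hx
            have := hpos x hx.1 ks
            simp only [Pi.zero_apply]
            linarith
          · exact HasSubset.Subset.eventuallyLE hsubA
        have h3 : 0 < (μ (Set.Icc (t₀-δ) t₀)).toReal := ENNReal.toReal_pos hne0 hfin
        nlinarith [mul_pos hc h3]
      have hηconst : ∀ s ∈ Set.Icc (t₀-δ) t₀, η ks s = η ks t₀ := by
        intro s hs
        have hsub : Set.Ioc s t₀ ⊆ Set.Icc (t₀-δ) t₀ :=
          fun x hx => ⟨le_trans hs.1 hx.1.le, hx.2⟩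
        have h0 : μ (Set.Ioc s t₀) = 0 := measure_mono_null hsub hμA0
        rw [hμdef, StieltjesFunction.measure_Ioc] at h0
        have h1 := ENNReal.ofReal_eq_zero.mp h0
        have h2 := (η ks).mono hs.2
        linarith
      -- the drift term
      set g : ℝ → ℝ := fun s => (n:ℝ)^2 * (An n).mulVec (Z' s) ks with hgdef
      have hgeq : g = fun s => (n:ℝ)^2 * ∑ j, An n ks j * Z' s j := by
        funext s
        simp [hgdef, Matrix.mulVec, dotProduct]
      have hgc : Continuous g := by
        rw [hgeq]
        exact continuous_const.mul
          (continuous_finset_sum _ (fun j _ => continuous_const.mul (hZ'cj j)))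
      set I : ℝ → ℝ := fun s => ∫ u in (0:ℝ)..s, g u with hIdef
      have hIderiv : ∀ s, HasDerivAt I (g s) s := fun s =>
        intervalIntegral.integral_hasDerivAt_right (hgc.intervalIntegrable 0 s)
          (hgc.stronglyMeasurableAtFilter _ _) hgc.continuousAt
      have hZrep : ∀ s : ℝ, 0 ≤ s → Z' s ks = I s + η ks s := by
        intro s hs
        rw [hZ'eq s hs, heq s hs ks]
        congr 1
        apply intervalIntegral.integral_congr
        intro u hu
        rw [Set.uIcc_of_le hs] at hu
        simp only [hgdef, hZ'eq u hu.1]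
      -- the auxiliary function H
      set H : ℝ → ℝ := fun s => (M - (I s + η ks t₀)) * Real.exp (2*(n:ℝ)^2*s) with hHdef
      have hEd : ∀ s : ℝ, HasDerivAt (fun x : ℝ => Real.exp (2*(n:ℝ)^2*x))
          (Real.exp (2*(n:ℝ)^2*s) * (2*(n:ℝ)^2)) s := by
        intro s
        have h1 : HasDerivAt (fun x : ℝ => 2*(n:ℝ)^2*x) (2*(n:ℝ)^2) s := by
          simpa using (hasDerivAt_id s).const_mul (2*(n:ℝ)^2)
        exact (Real.hasDerivAt_exp (2*(n:ℝ)^2*s)).comp s h1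
      have hHd : ∀ s : ℝ, HasDerivAt H ((0 - g s) * Real.exp (2*(n:ℝ)^2*s) +
          (M - (I s + η ks t₀)) * (Real.exp (2*(n:ℝ)^2*s) * (2*(n:ℝ)^2))) s := by
        intro s
        exact ((hasDerivAt_const s M).sub ((hIderiv s).add_const (η ks t₀))).mul (hEd s)
      have hmono : MonotoneOn H (Set.Icc (t₀-δ) t₀) := by
        apply monotoneOn_of_deriv_nonneg (convex_Icc _ _)
          (fun x _ => ((hHd x).differentiableAt.continuousAt).continuousWithinAt)
          (fun x _ => ((hHd x).differentiableAt).differentiableWithinAt)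
        intro x hx
        rw [interior_Icc] at hx
        have hx' : x ∈ Set.Icc (t₀-δ) t₀ := ⟨hx.1.le, hx.2.le⟩
        have hx0 : (0:ℝ) ≤ x := by have := hx.1; linarith
        have hZx : Z' x ks = I x + η ks t₀ := by
          rw [hZrep x hx0, hηconst x hx']
        have hgb : g x ≤ 2*(n:ℝ)^2 * (M - Z' x ks) := by
          have hb := An_mulVec_le n (Z' x) M hM0.le (fun j => hZM x (hAsub hx') j) ks
          have hn2 : (0:ℝ) ≤ (n:ℝ)^2 := sq_nonneg _
          calc g x ≤ (n:ℝ)^2 * (-2 * Z' x ks + 2*M) := by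
                rw [hgdef]; exact mul_le_mul_of_nonneg_left hb hn2
            _ = 2*(n:ℝ)^2 * (M - Z' x ks) := by ring
        have hE0 : (0:ℝ) < Real.exp (2*(n:ℝ)^2*x) := Real.exp_pos _
        rw [(hHd x).deriv, ← hZx]
        have hmul := mul_le_mul_of_nonneg_right hgb hE0.le
        nlinarith [hmul]
      -- conclude : H(t₀-δ) = 0 forces Z'(t₀-δ) ks = M
      have hmemL : t₀ - δ ∈ Set.Icc (t₀-δ) t₀ := Set.left_mem_Icc.mpr (by linarith)
      have hmemR : t₀ ∈ Set.Icc (t₀-δ) t₀ := Set.right_mem_Icc.mpr (by linarith)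
      have hH0 : H t₀ = 0 := by
        have hIη : I t₀ + η ks t₀ = M := by rw [← hZrep t₀ ht₀T.1]; exact hZt₀
        simp only [hHdef, hIη, sub_self, zero_mul]
      have hHle : H (t₀-δ) ≤ 0 := by
        have := hmono hmemL hmemR (by linarith)
        rwa [hH0] at this
      have hZta : Z' (t₀-δ) ks = I (t₀-δ) + η ks t₀ := by
        rw [hZrep _ (by linarith), hηconst _ hmemL]
      have hge : M ≤ Z' (t₀-δ) ks := by
        by_contra hlt
        push_neg at hlt
        have hE0 : (0:ℝ) < Real.exp (2*(n:ℝ)^2*(t₀-δ)) := Real.exp_pos _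
        simp only [hHdef] at hHle
        rw [← hZta] at hHle
        have hp := mul_pos (by linarith : (0:ℝ) < M - Z' (t₀-δ) ks) hE0
        linarith
      have hFt : F (t₀-δ) = M := by
        apply le_antisymm (hFM _ (hAsub hmemL))
        exact le_trans hge (Finset.le_sup' (fun j => Z' (t₀-δ) j) (Finset.mem_univ ks))
      have hmemC : t₀ - δ ∈ C := ⟨hAsub hmemL, hFt⟩
      have := csInf_le hCbdd hmemC
      linarith
  -- conclusion
  have hU0 : 0 ≤ U t k := by
    rw [hU t k]
    have := hpos t ht.1 k
    linarith
  rw [abs_of_nonneg hU0, hU t k]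
  have h1 : Z t k ≤ S := hZS t ht k
  have h2 : V t k ≤ S := le_trans (le_abs_self _) (hSle t ht k)
  linarith
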